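/- Let u be a v-minimal word of a synchronizing automaton 𝒜 and i ∈ supp(u). Then every element g ∈ ℐ_i is u-representable, i.e., there exists a word w that u-represents g. -/

import Mathlib

open scoped BigOperators

set_option synthInstance.maxHeartbeats 1000000
set_option maxHeartbeats 1000000

noncomputable section

/-- Action of a word on a state: `q · u`. -/
def actW {Q A : Type*} (δ : Q → A → Q) (q : Q) (u : List A) : Q :=
  u.foldl δ q

/-- The image `Q · u` of the full state set under a word. -/
def imageSet {Q A : Type*} [Fintype Q] [DecidableEq Q] (δ : Q → A → Q) (u : List A) :
    Finset Q :=
  Finset.image (fun q => actW δ q u) Finset.univ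

/-- The rank `rk(u) = |Q · u|` of a word. -/
def wordRank {Q A : Type*} [Fintype Q] [DecidableEq Q] (δ : Q → A → Q) (u : List A) : ℕ :=
  (imageSet δ u).card

/-- A word is reset (synchronizing) if `|Q · u| = 1`. -/
def IsReset {Q A : Type*} [Fintype Q] [DecidableEq Q] (δ : Q → A → Q) (u : List A) : Prop :=
  wordRank δ u = 1

/-- The automaton is synchronizing if it admits a reset word. -/
def IsSynchronizing {Q A : Type*} [Fintype Q] [DecidableEq Q] (δ : Q → A → Q) : Prop :=
  ∃ u : List A, IsReset δ u

/-- `Syn(𝒜)`, the set of reset words. -/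
def SynWords {Q A : Type*} [Fintype Q] [DecidableEq Q] (δ : Q → A → Q) : Set (List A) :=
  {u | IsReset δ u}

/-- The hyperplane `w⊥ = {v ∈ ℂQ : ∑ q, v q = 0}`. -/
def Wperp (Q : Type*) [Fintype Q] : Submodule ℂ (Q → ℂ) :=
  LinearMap.ker (∑ q : Q, (LinearMap.proj q : (Q → ℂ) →ₗ[ℂ] ℂ))

theorem mem_Wperp {Q : Type*} [Fintype Q] (v : Q → ℂ) :
    v ∈ Wperp Q ↔ ∑ q : Q, v q = 0 := by
  simp [Wperp, LinearMap.mem_ker, LinearMap.sum_apply]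

/-- The (right) action of a word on row vectors `v ↦ v·π(u)`. -/
def piLin {Q A : Type*} [Fintype Q] [DecidableEq Q] (δ : Q → A → Q) (u : List A) :
    (Q → ℂ) →ₗ[ℂ] (Q → ℂ) where
  toFun v := fun p => ∑ q ∈ Finset.univ.filter (fun q => actW δ q u = p), v q
  map_add' := by
    intro a b; funext p; simp [Finset.sum_add_distrib]
  map_smul' := by
    intro c v; funext p; simp [Finset.mul_sum]

theorem piLin_mem {Q A : Type*} [Fintype Q] [DecidableEq Q] (δ : Q → A → Q) (u : List A) :
    ∀ v ∈ Wperp Q, piLin δ u v ∈ Wperp Q := by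
  intro v hv
  rw [mem_Wperp] at hv ⊢
  have h := Finset.sum_fiberwise (Finset.univ : Finset Q) (fun q => actW δ q u) v
  calc ∑ p : Q, piLin δ u v p
      = ∑ p : Q, ∑ q ∈ Finset.univ.filter (fun q => actW δ q u = p), v q := rfl
    _ = ∑ q : Q, v q := h
    _ = 0 := hv

/-- The endomorphism of `w⊥` induced by a word. -/
def rhoEnd {Q A : Type*} [Fintype Q] [DecidableEq Q] (δ : Q → A → Q) (u : List A) :
    Module.End ℂ (Wperp Q) :=
  (piLin δ u).restrict (piLin_mem δ u)

/-- The representation `ρ : Σ* → End(w⊥)`; we record it in the multiplicative opposite so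
that `ρ (u ++ v) = ρ u * ρ v` (the paper's right-action convention). -/
def rho {Q A : Type*} [Fintype Q] [DecidableEq Q] (δ : Q → A → Q) (u : List A) :
    (Module.End ℂ (Wperp Q))ᵐᵒᵖ :=
  MulOpposite.op (rhoEnd δ u)

/-- `ℛ`, the ℂ-subalgebra generated by `ρ(Σ*)`. -/
def Ralg {Q A : Type*} [Fintype Q] [DecidableEq Q] (δ : Q → A → Q) :
    Subalgebra ℂ (Module.End ℂ (Wperp Q))ᵐᵒᵖ :=
  Algebra.adjoin ℂ (Set.range (rho δ))

/-- `ρ(u)` seen as an element of `ℛ`. -/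
def rhoR {Q A : Type*} [Fintype Q] [DecidableEq Q] (δ : Q → A → Q) (u : List A) :
    Ralg δ :=
  ⟨rho δ u, Algebra.subset_adjoin (Set.mem_range_self u)⟩

/-- The Jacobson radical `Rad(ℛ)` of `ℛ`, realised as a subset of the ambient algebra via
the standard characterisation: `x ∈ Rad(ℛ)` iff `x ∈ ℛ` and for every `y ∈ ℛ` the element
`1 - y * x` is left-invertible in `ℛ`. -/
def RadSet {Q A : Type*} [Fintype Q] [DecidableEq Q] (δ : Q → A → Q) :
    Set (Module.End ℂ (Wperp Q))ᵐᵒᵖ :=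
  {x | x ∈ Ralg δ ∧ ∀ y ∈ Ralg δ, ∃ z ∈ Ralg δ, z * (1 - y * x) = 1}

/-- `Rad(𝒜)`: the set of radical words, i.e. words `u` with `ρ(u) ∈ Rad(ℛ)`. -/
def RadWords {Q A : Type*} [Fintype Q] [DecidableEq Q] (δ : Q → A → Q) : Set (List A) :=
  {u | rho δ u ∈ RadSet δ}

/-- The automaton is semisimple when `Rad(𝒜) = Syn(𝒜)`. -/
def IsSemisimple {Q A : Type*} [Fintype Q] [DecidableEq Q] (δ : Q → A → Q) : Prop :=
  RadWords δ = SynWords δ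

/-- The `t`-packing number `D(t,r,n)`: the maximum size of a family of `r`-subsets of an
`n`-set in which every `t`-subset is contained in at most one member. -/
def packingNumber (t r n : ℕ) : ℕ :=
  sSup {m | ∃ F : Finset (Finset (Fin n)), F.card = m ∧ (∀ S ∈ F, S.card = r) ∧
    ∀ T : Finset (Fin n), T.card = t → (F.filter fun S => T ⊆ S).card ≤ 1}

/-- The former-rank `Fr(𝒜)`: the least rank of a non-reset word. -/
def formerRank {Q A : Type*} [Fintype Q] [DecidableEq Q] (δ : Q → A → Q) : ℕ :=
  sInf {m | ∃ u : List A, ¬ IsReset δ u ∧ wordRank δ u = m}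

/-- `Fs(𝒜)`: the set of former-synchronizing words. -/
def Fs {Q A : Type*} [Fintype Q] [DecidableEq Q] (δ : Q → A → Q) : Set (List A) :=
  {u | wordRank δ u = formerRank δ}

/-- `θ_i(u)`: the image of `ρ(u)` in the `i`-th Wedderburn–Artin matrix component, where
`e : ℛ → ∏ i, M_{n_i}(ℂ)` is the quotient map `ψ` followed by the fixed isomorphism. -/
def theta {Q A : Type*} [Fintype Q] [DecidableEq Q] (δ : Q → A → Q) {k : ℕ} {nn : Fin k → ℕ}
    (e : Ralg δ →ₐ[ℂ] ∀ i : Fin k, Matrix (Fin (nn i)) (Fin (nn i)) ℂ)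
    (u : List A) (i : Fin k) : Matrix (Fin (nn i)) (Fin (nn i)) ℂ :=
  e (rhoR δ u) i

/-- `supp(v) = {i : θ_i(v) ≠ 0}`. -/
def suppW {Q A : Type*} [Fintype Q] [DecidableEq Q] (δ : Q → A → Q) {k : ℕ} {nn : Fin k → ℕ}
    (e : Ralg δ →ₐ[ℂ] ∀ i : Fin k, Matrix (Fin (nn i)) (Fin (nn i)) ℂ)
    (v : List A) : Set (Fin k) :=
  {i | theta δ e v i ≠ 0}

/-- `u ∈ Σ* v Σ*`, i.e. `v` is a factor of `u`. -/
def InFactor {A : Type*} (v u : List A) : Prop :=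
  ∃ a b : List A, u = a ++ v ++ b

/-- `u` is a `v`-minimal word: `u ∈ Σ*vΣ*`, `supp(u)` is nonempty, and `supp(u)` is minimal
among the nonempty supports of words in `Σ*vΣ*`. -/
def IsVMinimal {Q A : Type*} [Fintype Q] [DecidableEq Q] (δ : Q → A → Q) {k : ℕ}
    {nn : Fin k → ℕ}
    (e : Ralg δ →ₐ[ℂ] ∀ i : Fin k, Matrix (Fin (nn i)) (Fin (nn i)) ℂ)
    (v u : List A) : Prop :=
  InFactor v u ∧ (suppW δ e u).Nonempty ∧
    ∀ z : List A, InFactor v z → suppW δ e z ⊆ suppW δ e u →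
      suppW δ e z = ∅ ∨ suppW δ e z = suppW δ e u

/-- The `i`-th factor monoid `ℳ_i = θ_i(Σ*)`. -/
def factorMonoid {Q A : Type*} [Fintype Q] [DecidableEq Q] (δ : Q → A → Q) {k : ℕ}
    {nn : Fin k → ℕ}
    (e : Ralg δ →ₐ[ℂ] ∀ i : Fin k, Matrix (Fin (nn i)) (Fin (nn i)) ℂ)
    (i : Fin k) : Set (Matrix (Fin (nn i)) (Fin (nn i)) ℂ) :=
  Set.range fun u : List A => theta δ e u i

/-- A two-sided ideal of the (sub)monoid `M`. -/
def IsSetIdeal {X : Type*} [Mul X] (M I : Set X) : Prop :=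
  I ⊆ M ∧ ∀ a ∈ M, ∀ x ∈ I, a * x ∈ I ∧ x * a ∈ I

/-- `I` is a `0`-minimal (two-sided) ideal of the monoid `M`. -/
def IsZeroMinimalIdeal {X : Type*} [Mul X] [Zero X] (M I : Set X) : Prop :=
  IsSetIdeal M I ∧ (0 : X) ∈ I ∧ I ≠ {0} ∧
    ∀ J : Set X, IsSetIdeal M J → (0 : X) ∈ J → J ⊆ I → J ≠ {0} → J = I

/-- `Rnk_i(g) = min {rk(u) : θ_i(u) = g}`. -/
def rnkElt {Q A : Type*} [Fintype Q] [DecidableEq Q] (δ : Q → A → Q) {k : ℕ}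
    {nn : Fin k → ℕ}
    (e : Ralg δ →ₐ[ℂ] ∀ i : Fin k, Matrix (Fin (nn i)) (Fin (nn i)) ℂ)
    (i : Fin k) (g : Matrix (Fin (nn i)) (Fin (nn i)) ℂ) : ℕ :=
  sInf {m | ∃ u : List A, theta δ e u i = g ∧ wordRank δ u = m}

/-- `Rnk(ℐ_i) = min {Rnk_i(g) : g ∈ ℐ_i ∖ {0}}`. -/
def rnkIdeal {Q A : Type*} [Fintype Q] [DecidableEq Q] (δ : Q → A → Q) {k : ℕ}
    {nn : Fin k → ℕ}
    (e : Ralg δ →ₐ[ℂ] ∀ i : Fin k, Matrix (Fin (nn i)) (Fin (nn i)) ℂ)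
    (i : Fin k) (I : Set (Matrix (Fin (nn i)) (Fin (nn i)) ℂ)) : ℕ :=
  sInf {m | ∃ g ∈ I, g ≠ 0 ∧ rnkElt δ e i g = m}

/-- `w` `u`-represents `g`: `w ∈ Σ*uΣ*`, `θ_i(w) = g`, and either `g = 0` or `rk(w)` is
minimum among all words with the first two properties. -/
def URepresents {Q A : Type*} [Fintype Q] [DecidableEq Q] (δ : Q → A → Q) {k : ℕ}
    {nn : Fin k → ℕ}
    (e : Ralg δ →ₐ[ℂ] ∀ i : Fin k, Matrix (Fin (nn i)) (Fin (nn i)) ℂ)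
    (u : List A) (i : Fin k) (w : List A) (g : Matrix (Fin (nn i)) (Fin (nn i)) ℂ) : Prop :=
  InFactor u w ∧ theta δ e w i = g ∧
    (g = 0 ∨ ∀ w' : List A, InFactor u w' → theta δ e w' i = g → wordRank δ w ≤ wordRank δ w')

/-- The relation `σ_i` on `ℐ_i`. -/
def sigmaRel {Q A : Type*} [Fintype Q] [DecidableEq Q] (δ : Q → A → Q) {k : ℕ}
    {nn : Fin k → ℕ}
    (e : Ralg δ →ₐ[ℂ] ∀ i : Fin k, Matrix (Fin (nn i)) (Fin (nn i)) ℂ)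
    (i : Fin k) (u : List A)
    (g f : Matrix (Fin (nn i)) (Fin (nn i)) ℂ) : Prop :=
  g = f ∨ ∃ w₁ w₂ : List A, URepresents δ e u i w₁ g ∧ URepresents δ e u i w₂ f ∧
    1 < (imageSet δ w₁ ∩ imageSet δ w₂).card

/-- `T ⊆ [1,k]` is a core. -/
def IsCore {Q A : Type*} [Fintype Q] [DecidableEq Q] (δ : Q → A → Q) {k : ℕ}
    {nn : Fin k → ℕ}
    (e : Ralg δ →ₐ[ℂ] ∀ i : Fin k, Matrix (Fin (nn i)) (Fin (nn i)) ℂ)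
    (T : Set (Fin k)) : Prop :=
  ∀ x : List A, (∀ i ∈ T, theta δ e x i = 0) → ∀ i : Fin k, theta δ e x i = 0

/-- A minimal core. -/
def IsMinimalCore {Q A : Type*} [Fintype Q] [DecidableEq Q] (δ : Q → A → Q) {k : ℕ}
    {nn : Fin k → ℕ}
    (e : Ralg δ →ₐ[ℂ] ∀ i : Fin k, Matrix (Fin (nn i)) (Fin (nn i)) ℂ)
    (T : Set (Fin k)) : Prop :=
  IsCore δ e T ∧ ∀ T' : Set (Fin k), T' ⊆ T → IsCore δ e T' → T' = T

/-- An automaton congruence. -/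
def IsCongruence {Q A : Type*} (δ : Q → A → Q) (σ : Q → Q → Prop) : Prop :=
  Equivalence σ ∧ ∀ q p : Q, σ q p → ∀ u : List A, σ (actW δ q u) (actW δ p u)

/-- A simple automaton: the only congruences are the identity and the universal relation. -/
def IsSimple {Q A : Type*} (δ : Q → A → Q) : Prop :=
  ∀ σ : Q → Q → Prop, IsCongruence δ σ → σ = Eq ∨ σ = fun _ _ => True



section Aux12

variable {Q A : Type*} [Fintype Q] [DecidableEq Q] (δ : Q → A → Q)

theorem actW_append' (q : Q) (a b : List A) :
    actW δ q (a ++ b) = actW δ (actW δ q a) b :=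
  List.foldl_append

theorem piLin_apply' (a : List A) (v : Q → ℂ) (p : Q) :
    piLin δ a v p = ∑ q ∈ Finset.univ.filter (fun q => actW δ q a = p), v q := rfl

theorem rhoR_congr' {a b : List A} (h : ∀ q : Q, actW δ q a = actW δ q b) :
    rhoR δ a = rhoR δ b := by
  have hp : piLin δ a = piLin δ b := by
    refine LinearMap.ext fun v => funext fun p => ?_
    rw [piLin_apply', piLin_apply']
    simp only [h]
  have hE : rhoEnd δ a = rhoEnd δ b := by
    refine LinearMap.ext fun x => Subtype.ext ?_
    simp only [rhoEnd, LinearMap.restrict_coe_apply, hp]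
  apply Subtype.ext
  show rho δ a = rho δ b
  unfold rho
  rw [hE]

theorem theta_congr' {k : ℕ} {nn : Fin k → ℕ}
    (e : Ralg δ →ₐ[ℂ] ∀ i : Fin k, Matrix (Fin (nn i)) (Fin (nn i)) ℂ)
    {a b : List A} (h : ∀ q : Q, actW δ q a = actW δ q b) (i : Fin k) :
    theta δ e a i = theta δ e b i := by
  unfold theta
  rw [rhoR_congr' δ h]

theorem piLin_append' (a b : List A) (v : Q → ℂ) :
    piLin δ (a ++ b) v = piLin δ b (piLin δ a v) := by
  funext p
  calc piLin δ (a ++ b) v p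
      = ∑ q ∈ Finset.univ.filter (fun q => actW δ (actW δ q a) b = p), v q := by
        rw [piLin_apply']
        apply Finset.sum_congr _ (fun _ _ => rfl)
        apply Finset.filter_congr
        intro q _
        simp [actW_append']
    _ = ∑ r ∈ Finset.univ.filter (fun r => actW δ r b = p),
          ∑ q ∈ Finset.univ.filter (fun q => actW δ q a = r), v q := by
        rw [Finset.sum_fiberwise_eq_sum_filter]
        apply Finset.sum_congr _ (fun _ _ => rfl)
        ext q
        simp
    _ = piLin δ b (piLin δ a v) p := by
        rw [piLin_apply' δ b]
        rfl

theorem rhoR_append' (a b : List A) :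
    rhoR δ (a ++ b) = rhoR δ a * rhoR δ b := by
  apply Subtype.ext
  rw [MulMemClass.coe_mul]
  show rho δ (a ++ b) = rho δ a * rho δ b
  unfold rho
  rw [← MulOpposite.op_mul]
  congr 1
  refine LinearMap.ext fun x => Subtype.ext ?_
  show (piLin δ (a ++ b)) ↑x = ((rhoEnd δ b) * (rhoEnd δ a)) x
  rw [Module.End.mul_apply]
  rw [piLin_append']
  rfl

theorem theta_append' {k : ℕ} {nn : Fin k → ℕ}
    (e : Ralg δ →ₐ[ℂ] ∀ i : Fin k, Matrix (Fin (nn i)) (Fin (nn i)) ℂ)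
    (a b : List A) (i : Fin k) :
    theta δ e (a ++ b) i = theta δ e a i * theta δ e b i := by
  unfold theta
  rw [rhoR_append', map_mul]
  rfl

theorem theta_reset' {k : ℕ} {nn : Fin k → ℕ}
    (e : Ralg δ →ₐ[ℂ] ∀ i : Fin k, Matrix (Fin (nn i)) (Fin (nn i)) ℂ)
    {z : List A} (hz : IsReset δ z) (i : Fin k) :
    theta δ e z i = 0 := by
  obtain ⟨p, hp⟩ : ∃ p : Q, ∀ q : Q, actW δ q z = p := by
    obtain ⟨p, hp⟩ := Finset.card_eq_one.mp hz
    refine ⟨p, fun q => ?_⟩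
    have hmem : actW δ q z ∈ imageSet δ z :=
      Finset.mem_image_of_mem _ (Finset.mem_univ q)
    rw [hp] at hmem
    simpa using hmem
  have hend : rhoEnd δ z = 0 := by
    refine LinearMap.ext fun x => Subtype.ext ?_
    show (piLin δ z) ↑x = ((0 : Module.End ℂ (Wperp Q)) x : Q → ℂ)
    rw [LinearMap.zero_apply, ZeroMemClass.coe_zero]
    funext r
    rw [piLin_apply']
    by_cases hr : r = p
    · subst hr
      rw [Finset.filter_true_of_mem (fun q _ => hp q)]
      exact (mem_Wperp _).mp x.2
    · rw [Finset.filter_false_of_mem, Finset.sum_empty]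
      · rfl
      · intro q _ hq
        rw [hp q] at hq
        exact hr hq.symm
  have hR : rhoR δ z = 0 := by
    apply Subtype.ext
    show rho δ z = ((0 : Ralg δ) : (Module.End ℂ (Wperp Q))ᵐᵒᵖ)
    rw [ZeroMemClass.coe_zero]
    unfold rho
    rw [hend, MulOpposite.op_zero]
  unfold theta
  rw [hR, map_zero]
  rfl

theorem factorMonoid_finite' {k : ℕ} {nn : Fin k → ℕ}
    (e : Ralg δ →ₐ[ℂ] ∀ i : Fin k, Matrix (Fin (nn i)) (Fin (nn i)) ℂ)
    (i : Fin k) : (factorMonoid δ e i).Finite := by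
  classical
  set F : List A → (Q → Q) × Matrix (Fin (nn i)) (Fin (nn i)) ℂ :=
    fun w => (fun q => actW δ q w, theta δ e w i) with hF
  have hS : (Set.range F).Finite := by
    apply Set.Finite.of_finite_image (f := Prod.fst)
    · exact Set.toFinite _
    · rintro x ⟨a, rfl⟩ y ⟨b, rfl⟩ hab
      have h : ∀ q : Q, actW δ q a = actW δ q b := fun q => congrFun hab q
      exact Prod.ext hab (theta_congr' δ e h i)
  have hEq : factorMonoid δ e i = Prod.snd '' Set.range F := by
    rw [← Set.range_comp]
    rfl
  rw [hEq]
  exact hS.image _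

theorem exists_zeroMinimalIdeal' {X : Type*} [Mul X] [Zero X] {M J : Set X}
    (hM : M.Finite) (hJ : IsSetIdeal M J) (h0 : (0 : X) ∈ J) (hne : J ≠ {0}) :
    ∃ K, K ⊆ J ∧ IsZeroMinimalIdeal M K := by
  classical
  set C : Set ℕ :=
    {n | ∃ K : Set X, IsSetIdeal M K ∧ (0 : X) ∈ K ∧ K ⊆ J ∧ K ≠ {0} ∧ K.ncard = n} with hC
  have hCne : C.Nonempty := ⟨J.ncard, J, hJ, h0, subset_rfl, hne, rfl⟩
  obtain ⟨K, hKid, hK0, hKJ, hKne, hKcard⟩ := Nat.sInf_mem hCne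
  refine ⟨K, hKJ, hKid, hK0, hKne, ?_⟩
  intro J' hJ'id hJ'0 hJ'K hJ'ne
  have hKfin : K.Finite := hM.subset hKid.1
  have h1 : sInf C ≤ J'.ncard := Nat.sInf_le ⟨J', hJ'id, hJ'0, hJ'K.trans hKJ, hJ'ne, rfl⟩
  rw [← hKcard] at h1
  exact Set.eq_of_subset_of_ncard_le hJ'K h1 hKfin

end Aux12

theorem stmt12 {Q A : Type*} [Fintype Q] [DecidableEq Q] (δ : Q → A → Q)
    {k : ℕ} {nn : Fin k → ℕ}
    (e : Ralg δ →ₐ[ℂ] ∀ i : Fin k, Matrix (Fin (nn i)) (Fin (nn i)) ℂ)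
    (he_surj : Function.Surjective e)
    (he_ker : ∀ x : Ralg δ, e x = 0 ↔ (x : (Module.End ℂ (Wperp Q))ᵐᵒᵖ) ∈ RadSet δ)
    (Ii : ∀ i : Fin k, Set (Matrix (Fin (nn i)) (Fin (nn i)) ℂ))
    (hIi : ∀ i : Fin k, IsZeroMinimalIdeal (factorMonoid δ e i) (Ii i))
    (hIuniq : ∀ (i : Fin k) (J : Set (Matrix (Fin (nn i)) (Fin (nn i)) ℂ)),
      IsZeroMinimalIdeal (factorMonoid δ e i) J → J = Ii i)
    (hsync : IsSynchronizing δ)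
    (v u : List A) (hu : IsVMinimal δ e v u) (i : Fin k) (hi : i ∈ suppW δ e u)
    (g : Matrix (Fin (nn i)) (Fin (nn i)) ℂ) (hg : g ∈ Ii i) :
    ∃ w : List A, URepresents δ e u i w g := by
  classical
  obtain ⟨z, hz⟩ := hsync
  have hθz : theta δ e z i = 0 := theta_reset' δ e hz i
  by_cases hg0 : g = 0
  · refine ⟨u ++ z, ⟨[], z, by simp⟩, ?_, Or.inl hg0⟩
    rw [theta_append', hθz, mul_zero, hg0]
  · set J : Set (Matrix (Fin (nn i)) (Fin (nn i)) ℂ) :=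
      {t | t = 0 ∨ ∃ w : List A, InFactor u w ∧ theta δ e w i = t} with hJdef
    have hz0M : (0 : Matrix (Fin (nn i)) (Fin (nn i)) ℂ) ∈ factorMonoid δ e i := ⟨z, hθz⟩
    have hJsub : J ⊆ factorMonoid δ e i := by
      rintro t (rfl | ⟨w, _, rfl⟩)
      · exact hz0M
      · exact ⟨w, rfl⟩
    have hJideal : IsSetIdeal (factorMonoid δ e i) J := by
      refine ⟨hJsub, ?_⟩
      rintro a ⟨x, rfl⟩ t (rfl | ⟨w, ⟨c, d, rfl⟩, rfl⟩)
      · exact ⟨Or.inl (mul_zero _), Or.inl (zero_mul _)⟩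
      · constructor
        · exact Or.inr ⟨x ++ (c ++ u ++ d), ⟨x ++ c, d, by simp [List.append_assoc]⟩,
            by rw [theta_append']⟩
        · exact Or.inr ⟨(c ++ u ++ d) ++ x, ⟨c, d ++ x, by simp [List.append_assoc]⟩,
            by rw [theta_append']⟩
    have h0J : (0 : Matrix (Fin (nn i)) (Fin (nn i)) ℂ) ∈ J := Or.inl rfl
    have hJne : J ≠ {0} := by
      intro h
      have huJ : theta δ e u i ∈ J := Or.inr ⟨u, ⟨[], [], by simp⟩, rfl⟩
      rw [h] at huJ
      exact hi huJ
    obtain ⟨K, hKJ, hKmin⟩ :=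
      exists_zeroMinimalIdeal' (factorMonoid_finite' δ e i) hJideal h0J hJne
    have hKI : K = Ii i := hIuniq i K hKmin
    have hgJ : g ∈ J := hKJ (hKI ▸ hg)
    obtain ⟨w0, hw0f, hw0θ⟩ : ∃ w : List A, InFactor u w ∧ theta δ e w i = g := by
      rcases hgJ with h | h
      · exact absurd h hg0
      · exact h
    set S : Set ℕ :=
      {m | ∃ w : List A, InFactor u w ∧ theta δ e w i = g ∧ wordRank δ w = m} with hS
    have hSne : S.Nonempty := ⟨wordRank δ w0, w0, hw0f, hw0θ, rfl⟩
    obtain ⟨w, hwf, hwθ, hwr⟩ := Nat.sInf_mem hSne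
    refine ⟨w, hwf, hwθ, Or.inr ?_⟩
    intro w' hw'f hw'θ
    rw [hwr]
    exact Nat.sInf_le ⟨w', hw'f, hw'θ, rfl⟩


end
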